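/- arXiv:2504.00405 — 4 statements merged into one kernel-verified Lean document; each statement's English description precedes it below -/
import Mathlib

section
/- The second-order condition for the pre-filter uniquely determines α_n: if k_n, k_{n-1}, k_{n-2} > 0, then ((α_n - 1) k_{n-2} - k_{n-1})/(k_{n-1} + k_{n-2}) · k_n²/2 - α_n (k_n + k_{n-1})²/2 + (α_n k_{n-1}/(k_{n-1} + k_{n-2})) (k_n + k_{n-1} + k_{n-2})²/2 = 0 if and only if α_n = k_n²/(k_{n-1} k_{n-2}). -/
theorem stmt_4 (kn knm1 knm2 α : ℝ) (hkn : 0 < kn) (hknm1 : 0 < knm1) (hknm2 : 0 < knm2) :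
    (((α - 1) * knm2 - knm1) / (knm1 + knm2)) * (kn ^ 2 / 2)
      - α * ((kn + knm1) ^ 2 / 2)
      + (α * knm1 / (knm1 + knm2)) * ((kn + knm1 + knm2) ^ 2 / 2) = 0
    ↔ α = kn ^ 2 / (knm1 * knm2) := by
  have hs : knm1 + knm2 ≠ 0 := by positivity
  have h12 : knm1 * knm2 ≠ 0 := by positivity
  have key : (((α - 1) * knm2 - knm1) / (knm1 + knm2)) * (kn ^ 2 / 2)
      - α * ((kn + knm1) ^ 2 / 2)
      + (α * knm1 / (knm1 + knm2)) * ((kn + knm1 + knm2) ^ 2 / 2)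
      = (α * knm1 * knm2 - kn ^ 2) / 2 := by
    field_simp
    ring
  rw [key, div_eq_zero_iff, eq_div_iff h12]
  constructor
  · rintro (h | h)
    · linarith
    · norm_num at h
  · intro h
    left
    linarith
end

section
/- The variable-step pre-filtered Implicit Euler method with α_n = k_n²/(k_{n-1}k_{n-2}) is exact on quadratics: for y(t) = at² + bt + c, with t_{n-2}, t_{n-1} = t_{n-2} + k_{n-2}, t_n = t_{n-1} + k_{n-1}, t_{n+1} = t_n + k_n (all steps positive), setting ỹ_n = y(t_n) - (α_n/2)((2k_{n-2}/(k_{n-1}+k_{n-2})) y(t_n) - 2y(t_{n-1}) + (2k_{n-1}/(k_{n-1}+k_{n-2})) y(t_{n-2})), we have y(t_{n+1}) - ỹ_n = k_n y'(t_{n+1}). -/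
theorem stmt_9 (a b c kn knm1 knm2 : ℝ)
    (hkn : 0 < kn) (hknm1 : 0 < knm1) (hknm2 : 0 < knm2)
    (y : ℝ → ℝ) (hy : ∀ t, y t = a * t ^ 2 + b * t + c)
    (y' : ℝ → ℝ) (hy' : ∀ t, y' t = 2 * a * t + b)
    (tnm2 tnm1 tn tnp1 α ytilde : ℝ)
    (h1 : tnm1 = tnm2 + knm2) (h2 : tn = tnm1 + knm1) (h3 : tnp1 = tn + kn)
    (hα : α = kn ^ 2 / (knm1 * knm2))
    (hyt : ytilde = y tn - (α / 2) *
      ((2 * knm2 / (knm1 + knm2)) * y tn - 2 * y tnm1 + (2 * knm1 / (knm1 + knm2)) * y tnm2)) :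
    y tnp1 - ytilde = kn * y' tnp1 := by
  subst hyt hα h3 h2 h1
  simp only [hy, hy']
  have hs : knm1 + knm2 ≠ 0 := by positivity
  field_simp
  ring
end

section
/- The variable-step pre-filter second-order condition determines α uniquely via exactness on t²: with grid t_1 = k_0, t_2 = k_0 + k_1, t_3 = k_0 + k_1 + k_2, t_4 = k_0 + k_1 + k_2 + k_3 (all k_i > 0), y_j = t_j², and ỹ_3 = y_3 - (α/2)((2k_1/(k_2+k_1)) y_3 - 2y_2 + (2k_2/(k_2+k_1)) y_1), the relation y_4 - ỹ_3 = k_3 · 2 t_4 holds if and only if α = k_3²/(k_2 k_1). -/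
theorem stmt_15 (k0 k1 k2 k3 α : ℝ)
    (h0 : 0 < k0) (h1 : 0 < k1) (h2 : 0 < k2) (h3 : 0 < k3)
    (t : ℕ → ℝ) (ht1 : t 1 = k0) (ht2 : t 2 = k0 + k1) (ht3 : t 3 = k0 + k1 + k2)
    (ht4 : t 4 = k0 + k1 + k2 + k3)
    (y : ℕ → ℝ) (hy : ∀ j, y j = (t j) ^ 2)
    (ytilde : ℝ)
    (hyt : ytilde = y 3 - (α / 2) *
      ((2 * k1 / (k2 + k1)) * y 3 - 2 * y 2 + (2 * k2 / (k2 + k1)) * y 1)) :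
    y 4 - ytilde = k3 * (2 * t 4) ↔ α = k3 ^ 2 / (k2 * k1) := by
  have hk : k2 + k1 ≠ 0 := by positivity
  have hk12 : k2 * k1 ≠ 0 := by positivity
  subst hyt
  simp only [hy, ht1, ht2, ht3, ht4]
  rw [eq_div_iff hk12]
  constructor
  · intro h
    field_simp at h
    nlinarith [h]
  · intro h
    field_simp
    nlinarith [h]
end

section
/- If the second-order Taylor condition holds with positive steps, the local truncation error of the variable-step pre-filtered implicit Euler method on any polynomial of degree ≤ 2 is zero: for y a polynomial of degree at most 2 over ℝ, with α_n = k_n²/(k_{n-1}k_{n-2}), the residual y(t_{n+1}) + ((α_n-1)k_{n-2} - k_{n-1})/(k_{n-1}+k_{n-2}) · y(t_n) - α_n y(t_{n-1}) + (α_n k_{n-1}/(k_{n-1}+k_{n-2})) y(t_{n-2}) - k_n y'(t_{n+1}) equals zero. -/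
open Polynomial

theorem stmt_19 (kn knm1 knm2 tnm2 tnm1 tn tnp1 α : ℝ)
    (hkn : 0 < kn) (hknm1 : 0 < knm1) (hknm2 : 0 < knm2)
    (h1 : tnm1 = tnm2 + knm2) (h2 : tn = tnm1 + knm1) (h3 : tnp1 = tn + kn)
    (hα : α = kn ^ 2 / (knm1 * knm2))
    (y : Polynomial ℝ) (hdeg : y.degree ≤ 2) :
    y.eval tnp1 + (((α - 1) * knm2 - knm1) / (knm1 + knm2)) * y.eval tn
      - α * y.eval tnm1 + (α * knm1 / (knm1 + knm2)) * y.eval tnm2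
      - kn * ((derivative y).eval tnp1) = 0 := by
  have hy : y = C (y.coeff 0) + C (y.coeff 1) * X + C (y.coeff 2) * X ^ 2 := by
    ext n
    rcases n with _|_|_|n
    · simp
    · simp
    · simp
    · rw [y.coeff_eq_zero_of_degree_lt (lt_of_le_of_lt hdeg (by exact_mod_cast (by omega : (2:ℕ) < n+3)))]
      simp [coeff_C, coeff_X, coeff_X_pow]
  subst h1 h2 h3 hα
  rw [hy]
  have h12 : knm1 + knm2 ≠ 0 := by positivity
  have h1' : knm1 ≠ 0 := hknm1.ne'
  have h2' : knm2 ≠ 0 := hknm2.ne'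
  simp only [derivative_add, derivative_mul, derivative_C, derivative_X,
    derivative_X_pow, eval_add, eval_mul, eval_C, eval_X, eval_pow, eval_zero, eval_one]
  field_simp
  ring
end
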